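/- Almost-sure termination via bounded probabilistic variant: let (eₙ) be a stochastic process taking integer values in [0, K] for a constant K ≥ 1, adapted to a filtration, such that whenever eₙ > 0, the conditional probability that e_{n+1} < eₙ given the history is at least ε > 0. Then with probability 1, there exists n with eₙ = 0. -/

import Mathlib

open MeasureTheory

/-- Almost-sure termination via a bounded probabilistic variant: an adapted
process `e` with values in `{0,…,K}` (`K ≥ 1`) such that, whenever `eₙ > 0`,
the conditional probability (given the past) that `e_{n+1} < eₙ` is at least
`ε > 0`, hits `0` with probability `1`. -/
theorem ast_bounded_variant {Ω : Type*} {m0 : MeasurableSpace Ω}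
    (P : Measure Ω) [IsProbabilityMeasure P]
    (ℱ : Filtration ℕ m0)
    (e : ℕ → Ω → ℕ) (K : ℕ) (hK : 1 ≤ K)
    (hadapt : ∀ n, Measurable[ℱ n] (e n))
    (hbound : ∀ n ω, e n ω ≤ K)
    (ε : ℝ) (hε0 : 0 < ε) (hε1 : ε ≤ 1)
    (hdec : ∀ n, ∀ᵐ ω ∂P, 0 < e n ω →
      ε ≤ (P[Set.indicator {ω' | e (n + 1) ω' < e n ω'}
              (fun _ => (1 : ℝ)) | ℱ n]) ω) :
    P {ω | ∃ n, e n ω = 0} = 1 := by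
  classical
  have hle : ∀ n, ℱ n ≤ m0 := fun n => ℱ.le n
  have hem0 : ∀ n, Measurable (e n) := fun n => (hadapt n).mono (hle n) le_rfl
  -- the "good step" sets
  set F : ℕ → Set Ω := fun j => {ω | e (j+1) ω < e j ω ∨ e j ω = 0} with hFdef
  set f : ℕ → Ω → ℝ := fun j => (F j).indicator (fun _ => (1:ℝ)) with hfdef
  have hFmeas : ∀ j, MeasurableSet[ℱ (j+1)] (F j) := by
    intro j
    have h1 : Measurable[ℱ (j+1)] (e j) := (hadapt j).mono (ℱ.mono j.le_succ) le_rfl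
    have h2 : MeasurableSet[ℱ (j+1)] {ω | e (j+1) ω < e j ω} :=
      measurableSet_lt (hadapt (j+1)) h1
    have h3 : MeasurableSet[ℱ (j+1)] {ω | e j ω = 0} :=
      h1 (measurableSet_singleton 0)
    exact h2.union h3
  have hf01 : ∀ j ω, 0 ≤ f j ω ∧ f j ω ≤ 1 := by
    intro j ω
    by_cases h : ω ∈ F j <;> simp [hfdef, h]
  have hfSM : ∀ j, StronglyMeasurable[ℱ (j+1)] (f j) := fun j =>
    stronglyMeasurable_const.indicator (hFmeas j)
  have hfint : ∀ j, Integrable (f j) P := fun j =>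
    (integrable_const (1:ℝ)).indicator (hle (j+1) _ (hFmeas j))
  -- step lower bound for conditional expectation of f
  have hfeps : ∀ j, ∀ᵐ ω ∂P, ε ≤ (P[f j | ℱ j]) ω := by
    intro j
    set u : Ω → ℝ := Set.indicator {ω' | e (j + 1) ω' < e j ω'} (fun _ => (1:ℝ)) with hu
    set v : Ω → ℝ := Set.indicator {ω' | e j ω' = 0} (fun _ => (1:ℝ)) with hv
    have huint : Integrable u P := by
      refine (integrable_const (1:ℝ)).indicator ?_
      exact measurableSet_lt (hem0 (j+1)) (hem0 j)
    have hvmeas : MeasurableSet[ℱ j] {ω' | e j ω' = 0} :=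
      (hadapt j) (measurableSet_singleton 0)
    have hvint : Integrable v P := (integrable_const (1:ℝ)).indicator (hle j _ hvmeas)
    have hu_le : u ≤ᵐ[P] f j := by
      refine Filter.Eventually.of_forall fun ω => ?_
      by_cases h : e (j+1) ω < e j ω
      · have : ω ∈ F j := Or.inl h
        simp [hu, hfdef, h, this]
      · simp only [hu, Set.indicator]
        simp only [Set.mem_setOf_eq, h, if_false]
        exact (hf01 j ω).1
    have hv_le : v ≤ᵐ[P] f j := by
      refine Filter.Eventually.of_forall fun ω => ?_
      by_cases h : e j ω = 0
      · have : ω ∈ F j := Or.inr h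
        simp [hv, hfdef, h, this]
      · simp only [hv, Set.indicator]
        simp only [Set.mem_setOf_eq, h, if_false]
        exact (hf01 j ω).1
    have h1 : P[u | ℱ j] ≤ᵐ[P] P[f j | ℱ j] := condExp_mono huint (hfint j) hu_le
    have h2 : P[v | ℱ j] ≤ᵐ[P] P[f j | ℱ j] := condExp_mono hvint (hfint j) hv_le
    have h3 : P[v | ℱ j] = v :=
      condExp_of_stronglyMeasurable (hle j)
        (stronglyMeasurable_const.indicator hvmeas) hvint
    rw [h3] at h2
    filter_upwards [hdec j, h1, h2] with ω hω h1ω h2ω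
    by_cases h : 0 < e j ω
    · exact le_trans (hω h) h1ω
    · have h0 : e j ω = 0 := Nat.eq_zero_of_not_pos h
      have : v ω = 1 := by simp [hv, h0]
      calc ε ≤ 1 := hε1
        _ = v ω := this.symm
        _ ≤ _ := h2ω
  -- the product process
  set g : ℕ → ℕ → Ω → ℝ := fun n k ω => ∏ j ∈ Finset.Ico n (n+k), f j ω with hgdef
  have hg01 : ∀ n k ω, 0 ≤ g n k ω ∧ g n k ω ≤ 1 := by
    intro n k ω
    constructor
    · exact Finset.prod_nonneg fun j _ => (hf01 j ω).1
    · exact Finset.prod_le_one (fun j _ => (hf01 j ω).1) (fun j _ => (hf01 j ω).2)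
  have hgmeas : ∀ n k, Measurable[ℱ (n+k)] (g n k) := by
    intro n k
    refine Finset.measurable_prod _ fun j hj => ?_
    have hj' : j + 1 ≤ n + k := Finset.mem_Ico.mp hj |>.2
    exact (measurable_const.indicator ((ℱ.mono hj') _ (hFmeas j)))
  have hgint : ∀ n k, Integrable (g n k) P := by
    intro n k
    refine Integrable.mono' (integrable_const (1:ℝ))
      (((hgmeas n k).mono (hle (n+k)) le_rfl).aestronglyMeasurable) ?_
    refine Filter.Eventually.of_forall fun ω => ?_
    rw [Real.norm_eq_abs, abs_of_nonneg (hg01 n k ω).1]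
    exact (hg01 n k ω).2
  -- key estimate: conditional probability of k good steps
  have keyA : ∀ n k, ∀ᵐ ω ∂P, ε ^ k ≤ (P[g n k | ℱ n]) ω := by
    intro n k
    induction k with
    | zero =>
        have : g n 0 = fun _ => (1:ℝ) := by
          funext ω; simp [hgdef]
        rw [this, condExp_const (hle n) (1:ℝ)]
        filter_upwards with ω
        rw [pow_zero]
    | succ k ih =>
        have hsplit : g n (k+1) = g n k * f (n+k) := by
          funext ω
          simp only [hgdef, Pi.mul_apply]
          have hx : n + (k+1) = (n+k) + 1 := rfl
          rw [hx]
          exact Finset.prod_Ico_succ_top (Nat.le_add_right n k) _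
        have hmul : P[g n (k+1) | ℱ (n+k)] =ᵐ[P] g n k * P[f (n+k) | ℱ (n+k)] := by
          rw [hsplit]
          refine condExp_mul_of_stronglyMeasurable_left
            ((hgmeas n k).stronglyMeasurable) ?_ (hfint (n+k))
          rw [← hsplit]; exact hgint n (k+1)
        have hlb : (fun ω => ε * g n k ω) ≤ᵐ[P] P[g n (k+1) | ℱ (n+k)] := by
          filter_upwards [hmul, hfeps (n+k)] with ω h1 h2
          rw [h1]
          have := mul_le_mul_of_nonneg_left h2 (hg01 n k ω).1
          calc ε * g n k ω = g n k ω * ε := mul_comm _ _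
            _ ≤ g n k ω * (P[f (n+k) | ℱ (n+k)]) ω := this
        have hsmul_int : Integrable (fun ω => ε * g n k ω) P := (hgint n k).const_mul ε
        have hmono : P[fun ω => ε * g n k ω | ℱ n] ≤ᵐ[P] P[P[g n (k+1) | ℱ (n+k)] | ℱ n] :=
          condExp_mono hsmul_int integrable_condExp hlb
        have htower : P[P[g n (k+1) | ℱ (n+k)] | ℱ n] =ᵐ[P] P[g n (k+1) | ℱ n] :=
          condExp_condExp_of_le (ℱ.mono (Nat.le_add_right n k)) (hle (n+k))
        have hsmul : P[fun ω => ε * g n k ω | ℱ n] =ᵐ[P] fun ω => ε * (P[g n k | ℱ n]) ω := by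
          have : (fun ω => ε * g n k ω) = ε • (g n k) := by funext ω; simp [smul_eq_mul]
          rw [this]
          filter_upwards [condExp_smul (μ := P) (m := ℱ n) ε (g n k)] with ω hω
          simp only [hω, Pi.smul_apply, smul_eq_mul]
        filter_upwards [ih, hmono, htower, hsmul] with ω hih h1 h2 h3
        have : ε * ε ^ k ≤ ε * (P[g n k | ℱ n]) ω :=
          mul_le_mul_of_nonneg_left hih hε0.le
        calc ε ^ (k+1) = ε * ε ^ k := by ring
          _ ≤ ε * (P[g n k | ℱ n]) ω := this
          _ = (P[fun ω => ε * g n k ω | ℱ n]) ω := h3.symm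
          _ ≤ (P[P[g n (k+1) | ℱ (n+k)] | ℱ n]) ω := h1
          _ = (P[g n (k+1) | ℱ n]) ω := h2
  -- the "still alive" sets
  set S : ℕ → Set Ω := fun n => {ω | ∀ j ≤ n, 0 < e j ω} with hSdef
  have hSmeas : ∀ n, MeasurableSet[ℱ n] (S n) := by
    intro n
    have : S n = ⋂ j ∈ Set.Iic n, {ω | 0 < e j ω} := by
      ext ω; simp [hSdef]
    rw [this]
    refine MeasurableSet.biInter (Set.to_countable _) fun j hj => ?_
    exact ((hadapt j).mono (ℱ.mono hj) le_rfl) measurableSet_Ioi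
  have hSm0 : ∀ n, MeasurableSet (S n) := fun n => hle n _ (hSmeas n)
  -- combinatorial fact: alive through n+K and K good steps is impossible
  have hcomb : ∀ n ω, ω ∈ S (n + K) → g n K ω = 0 := by
    intro n ω hω
    by_contra hne
    have hall : ∀ j ∈ Finset.Ico n (n+K), f j ω = 1 := by
      intro j hj
      rcases (hf01 j ω) with ⟨h0, h1⟩
      by_contra hne1
      have : f j ω = 0 := by
        by_cases h : ω ∈ F j
        · exact absurd (by simp [hfdef, h]) hne1
        · simp [hfdef, h]
      exact hne (Finset.prod_eq_zero hj this)
    have hFall : ∀ j, n ≤ j → j < n + K → e (j+1) ω < e j ω := by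
      intro j h1 h2
      have hfj : f j ω = 1 := hall j (Finset.mem_Ico.mpr ⟨h1, h2⟩)
      have hFj : ω ∈ F j := by
        by_contra h
        simp [hfdef, h] at hfj
      rcases hFj with h | h
      · exact h
      · exfalso
        have := hω j h2.le
        omega
    have hdesc : ∀ i, i ≤ K → e (n + i) ω + i ≤ e n ω := by
      intro i hi
      induction i with
      | zero => simp
      | succ i ihh =>
          have hi' : i ≤ K := Nat.le_of_succ_le hi
          have hstep : e (n + i + 1) ω < e (n + i) ω :=
            hFall (n + i) (Nat.le_add_right n i) (by omega)
          have := ihh hi'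
          have : e (n + (i+1)) ω + (i+1) ≤ e (n + i) ω + i := by
            have hx : n + (i+1) = (n + i) + 1 := by omega
            rw [hx]; omega
          omega
    have := hdesc K le_rfl
    have hpos : 0 < e (n + K) ω := hω (n + K) le_rfl
    have := hbound n ω
    omega
  -- measure recursion
  set q : ℝ := 1 - ε ^ K with hq
  have hεK0 : 0 < ε ^ K := pow_pos hε0 K
  have hεK1 : ε ^ K ≤ 1 := pow_le_one₀ hε0.le hε1
  have hq0 : 0 ≤ q := by simp only [hq]; linarith
  have hq1 : q < 1 := by simp only [hq]; linarith
  have hrec : ∀ m : ℕ, (P (S ((m+1) * K))).toReal ≤ q * (P (S (m * K))).toReal := by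
    intro m
    set n := m * K with hn
    have hBA : S ((m+1) * K) ⊆ S n := by
      intro ω hω j hj
      exact hω j (le_trans hj (by simp only [hn, Nat.succ_mul]; omega))
    have hnK : (m+1) * K = n + K := by simp only [hn, Nat.succ_mul]
    -- pointwise inequality
    have hpt : ∀ ω, (S ((m+1)*K)).indicator (fun _ => (1:ℝ)) ω
        + (S n).indicator (g n K) ω ≤ (S n).indicator (fun _ => (1:ℝ)) ω := by
      intro ω
      by_cases hA : ω ∈ S n
      · by_cases hB : ω ∈ S ((m+1)*K)
        · have hg0 : g n K ω = 0 := hcomb n ω (by rwa [← hnK])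
          simp [hA, hB, hg0]
        · simp [hA, hB, (hg01 n K ω).2]
      · have hB : ω ∉ S ((m+1)*K) := fun h => hA (hBA h)
        simp [hA, hB]
    -- integrate
    have hint1 : Integrable ((S ((m+1)*K)).indicator (fun _ => (1:ℝ))) P :=
      (integrable_const (1:ℝ)).indicator (hSm0 _)
    have hint2 : Integrable ((S n).indicator (g n K)) P :=
      (hgint n K).indicator (hSm0 n)
    have hint3 : Integrable ((S n).indicator (fun _ => (1:ℝ))) P :=
      (integrable_const (1:ℝ)).indicator (hSm0 n)
    have hIsum : ∫ ω, ((S ((m+1)*K)).indicator (fun _ => (1:ℝ)) ω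
          + (S n).indicator (g n K) ω) ∂P ≤ ∫ ω, (S n).indicator (fun _ => (1:ℝ)) ω ∂P :=
      integral_mono (hint1.add hint2) hint3 hpt
    rw [integral_add hint1 hint2] at hIsum
    rw [integral_indicator_const (1:ℝ) (hSm0 _), integral_indicator_const (1:ℝ) (hSm0 n)]
      at hIsum
    simp only [smul_eq_mul, mul_one] at hIsum
    -- lower bound the middle integral via condexp
    have hmid : ε ^ K * (P (S n)).toReal ≤ ∫ ω, (S n).indicator (g n K) ω ∂P := by
      rw [integral_indicator (hSm0 n)]
      have h1 : ∫ ω in S n, g n K ω ∂P = ∫ ω in S n, (P[g n K | ℱ n]) ω ∂P :=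
        (setIntegral_condExp (hle n) (hgint n K) (hSmeas n)).symm
      rw [h1]
      have h2 : ∫ ω in S n, (fun _ => ε ^ K) ω ∂P ≤ ∫ ω in S n, (P[g n K | ℱ n]) ω ∂P := by
        refine setIntegral_mono_ae (integrable_const _).integrableOn
          integrable_condExp.integrableOn ?_
        exact keyA n K
      calc ε ^ K * (P (S n)).toReal = ∫ _ω in S n, ε ^ K ∂P := by
            rw [setIntegral_const, smul_eq_mul, mul_comm]; rfl
        _ ≤ _ := h2
    calc (P (S ((m+1)*K))).toReal
        ≤ (P (S n)).toReal - ∫ ω, (S n).indicator (g n K) ω ∂P := by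
          simp only [measureReal_def] at hIsum; linarith
      _ ≤ (P (S n)).toReal - ε ^ K * (P (S n)).toReal := by linarith
      _ = q * (P (S n)).toReal := by simp only [hq]; ring
  -- geometric decay
  have hgeo : ∀ m : ℕ, (P (S (m * K))).toReal ≤ q ^ m := by
    intro m
    induction m with
    | zero =>
        simpa using ENNReal.toReal_mono (by simp) (prob_le_one (μ := P) (s := S 0))
    | succ m ih =>
        calc (P (S ((m+1) * K))).toReal ≤ q * (P (S (m * K))).toReal := hrec m
          _ ≤ q * q ^ m := mul_le_mul_of_nonneg_left ih hq0
          _ = q ^ (m+1) := by ring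
  -- conclusion
  have hTmeas : MeasurableSet {ω | ∃ n, e n ω = 0} := by
    have : {ω | ∃ n, e n ω = 0} = ⋃ n, (e n) ⁻¹' {0} := by ext ω; simp
    rw [this]
    exact MeasurableSet.iUnion fun n => (hem0 n) (measurableSet_singleton 0)
  have hNsub : ∀ m : ℕ, {ω | ∃ n, e n ω = 0}ᶜ ⊆ S (m * K) := by
    intro m ω hω j _
    simp only [Set.mem_compl_iff, Set.mem_setOf_eq, not_exists] at hω
    exact Nat.pos_of_ne_zero (hω j)
  have hN0 : (P {ω | ∃ n, e n ω = 0}ᶜ).toReal = 0 := by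
    have hub : ∀ m : ℕ, (P {ω | ∃ n, e n ω = 0}ᶜ).toReal ≤ q ^ m := fun m =>
      le_trans (ENNReal.toReal_mono (measure_ne_top P _) (measure_mono (hNsub m))) (hgeo m)
    have hlim : Filter.Tendsto (fun m : ℕ => q ^ m) Filter.atTop (nhds 0) :=
      tendsto_pow_atTop_nhds_zero_of_lt_one hq0 hq1
    have hle0 : (P {ω | ∃ n, e n ω = 0}ᶜ).toReal ≤ 0 :=
      le_of_tendsto_of_tendsto' tendsto_const_nhds hlim hub
    exact le_antisymm hle0 ENNReal.toReal_nonneg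
  have hNzero : P {ω | ∃ n, e n ω = 0}ᶜ = 0 :=
    (ENNReal.toReal_eq_zero_iff _).mp hN0 |>.resolve_right (measure_ne_top P _)
  rwa [prob_compl_eq_zero_iff hTmeas] at hNzero
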